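/- arXiv:2210.15171 — 4 statements merged into one kernel-verified Lean document; each statement's English description precedes it below -/
import Mathlib

section
/- Let A be an mth-order n-dimensional Z-tensor (real tensor with nonpositive off-diagonal entries) and b a nonnegative vector in R^n. If the set S_g = {x ≥ 0 : A x^{m-1} ≥ b} is nonempty, then S_g has a minimal element x*, and x* satisfies A x*^{m-1} = b; moreover x* ≤ y for every nonnegative solution y of A y^{m-1} = b. -/
open Finset Filter

noncomputable section

/-- Action of an order-(p+1) tensor (p trailing indices):
`(A x^{p})_i = ∑ a_{i i₂ … i_{p+1}} x_{i₂} ⋯ x_{i_{p+1}}`. -/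
def tapp (p n : ℕ) (A : Fin n → (Fin p → Fin n) → ℝ) (x : Fin n → ℝ) : Fin n → ℝ :=
  fun i => ∑ js : Fin p → Fin n, A i js * ∏ j, x (js j)

/-- A `Z`-tensor: all off-diagonal entries are nonpositive. -/
def IsZTensor (p n : ℕ) (A : Fin n → (Fin p → Fin n) → ℝ) : Prop :=
  ∀ i js, (∃ j, js j ≠ i) → A i js ≤ 0

/-- The identity tensor. -/
def identT (p n : ℕ) : Fin n → (Fin p → Fin n) → ℝ :=
  fun i js => if ∀ j, js j = i then 1 else 0

/-- Spectral radius of a tensor: sup of moduli of (real) eigenvalues. -/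
def tensorSpecRad (p n : ℕ) (B : Fin n → (Fin p → Fin n) → ℝ) : ℝ :=
  sSup {r : ℝ | ∃ lam : ℝ, ∃ x : Fin n → ℝ, x ≠ 0 ∧
    (∀ i, tapp p n B x i = lam * x i ^ p) ∧ r = |lam|}

/-- A nonsingular M-tensor: `A = s I − B` with `B ≥ 0` and `s > ρ(B)`. -/
def IsMTensor (p n : ℕ) (A : Fin n → (Fin p → Fin n) → ℝ) : Prop :=
  ∃ s : ℝ, ∃ B : Fin n → (Fin p → Fin n) → ℝ,
    (∀ i js, 0 ≤ B i js) ∧ tensorSpecRad p n B < s ∧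
    ∀ i js, A i js = s * identT p n i js - B i js

/-- The diagonal-part tensor of `A`. -/
def diagT (p n : ℕ) (A : Fin n → (Fin p → Fin n) → ℝ) : Fin n → (Fin p → Fin n) → ℝ :=
  fun i js => if ∀ j, js j = i then A i (fun _ => i) else 0

/-- The majorization matrix of `A`: `M_{ij} = a_{i j … j}`. -/
def majMatrix (p n : ℕ) (A : Fin n → (Fin p → Fin n) → ℝ) : Matrix (Fin n) (Fin n) ℝ :=
  fun i j => A i (fun _ => j)

/-- The "mixed index" part `N = M_tensor − A`: zero on constant trailing tuples,
`−A` elsewhere. -/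
def NPart (p n : ℕ) (A : Fin n → (Fin p → Fin n) → ℝ) : Fin n → (Fin p → Fin n) → ℝ :=
  fun i js => if ∀ j' j'', js j' = js j'' then 0 else -A i js

/-- A nonsingular M-matrix: a Z-matrix with `M y > 0` for some `y > 0`. -/
def IsMMatrix (n : ℕ) (P : Matrix (Fin n) (Fin n) ℝ) : Prop :=
  (∀ i j, i ≠ j → P i j ≤ 0) ∧ ∃ y : Fin n → ℝ, (∀ i, 0 < y i) ∧ ∀ i, 0 < P.mulVec y i

/-- Spectral radius of a real matrix (via its complex spectrum). -/
def matSpecRad (n : ℕ) (J : Matrix (Fin n) (Fin n) ℝ) : ℝ :=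
  sSup {r : ℝ | ∃ μ ∈ spectrum ℂ (J.map (Complex.ofReal ·)), r = ‖μ‖}

/-- Irreducibility of a matrix. -/
def MatIrreducible (n : ℕ) (J : Matrix (Fin n) (Fin n) ℝ) : Prop :=
  ∀ S : Finset (Fin n), S.Nonempty → S ≠ Finset.univ → ∃ i ∈ S, ∃ j, j ∉ S ∧ J i j ≠ 0

/-- Monotonicity: decreasing off coordinates (keeping coordinate `i` fixed) increases `(Ax)_i`. -/
lemma tapp_anti (p n : ℕ) (A : Fin n → (Fin p → Fin n) → ℝ) (hA : IsZTensor p n A)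
    (x z : Fin n → ℝ) (hz : 0 ≤ z) (hzx : z ≤ x) (i : Fin n) (hi : z i = x i) :
    tapp p n A x i ≤ tapp p n A z i := by
  unfold tapp
  apply Finset.sum_le_sum
  intro js _
  by_cases h : ∀ j, js j = i
  · have : (∏ j, x (js j)) = ∏ j, z (js j) :=
      Finset.prod_congr rfl (fun j _ => by rw [h j, hi])
    rw [this]
  · push_neg at h
    have ha : A i js ≤ 0 := hA i js h
    have hprod : (∏ j, z (js j)) ≤ ∏ j, x (js j) :=
      Finset.prod_le_prod (fun j _ => hz _) (fun j _ => hzx _)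
    exact mul_le_mul_of_nonpos_left hprod ha

lemma tapp_continuous (p n : ℕ) (A : Fin n → (Fin p → Fin n) → ℝ) (i : Fin n) :
    Continuous (fun x : Fin n → ℝ => tapp p n A x i) := by
  unfold tapp
  apply continuous_finset_sum
  intro js _
  exact continuous_const.mul (continuous_finset_prod _ fun j _ => continuous_apply _)

lemma tapp_nonpos (p n : ℕ) (hp : 0 < p) (A : Fin n → (Fin p → Fin n) → ℝ)
    (hA : IsZTensor p n A) (x : Fin n → ℝ) (hx : 0 ≤ x) (i : Fin n) (hxi : x i = 0) :
    tapp p n A x i ≤ 0 := by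
  unfold tapp
  apply Finset.sum_nonpos
  intro js _
  by_cases h : ∀ j, js j = i
  · have : (∏ j, x (js j)) = 0 := by
      apply Finset.prod_eq_zero (Finset.mem_univ (⟨0, hp⟩ : Fin p))
      rw [h ⟨0, hp⟩, hxi]
    rw [this, mul_zero]
  · push_neg at h
    exact mul_nonpos_of_nonpos_of_nonneg (hA i js h)
      (Finset.prod_nonneg fun j _ => hx _)

/-- For a Z-tensor `A` and `b ≥ 0`, if `S_g = {x ≥ 0 : A x^{m-1} ≥ b}` is
nonempty then it has a minimal element, which is the minimal nonnegative solution of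
`A x^{m-1} = b`. -/
theorem stmt0 (m n : ℕ) (hm : 2 ≤ m) (A : Fin n → (Fin (m-1) → Fin n) → ℝ)
    (hA : IsZTensor (m-1) n A) (b : Fin n → ℝ) (hb : 0 ≤ b)
    (hne : ∃ x : Fin n → ℝ, 0 ≤ x ∧ b ≤ tapp (m-1) n A x) :
    ∃ xs : Fin n → ℝ, (0 ≤ xs ∧ b ≤ tapp (m-1) n A xs) ∧
      (∀ y : Fin n → ℝ, 0 ≤ y → b ≤ tapp (m-1) n A y → xs ≤ y) ∧
      tapp (m-1) n A xs = b ∧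
      (∀ y : Fin n → ℝ, 0 ≤ y → tapp (m-1) n A y = b → xs ≤ y) := by
  have hp : 0 < m - 1 := by omega
  obtain ⟨x0, hx00, hx0S⟩ := hne
  -- S closed under componentwise inf
  have hmin : ∀ x y : Fin n → ℝ, 0 ≤ x → b ≤ tapp (m-1) n A x → 0 ≤ y → b ≤ tapp (m-1) n A y →
      b ≤ tapp (m-1) n A (x ⊓ y) := by
    intro x y hx hxS hy hyS
    intro i
    have hz0 : (0 : Fin n → ℝ) ≤ x ⊓ y := le_inf hx hy
    rcases le_total (x i) (y i) with hc | hc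
    · have := tapp_anti (m-1) n A hA x (x ⊓ y) hz0 inf_le_left i (by
        simp [min_eq_left hc])
      exact le_trans (hxS i) this
    · have := tapp_anti (m-1) n A hA y (x ⊓ y) hz0 inf_le_right i (by
        simp [min_eq_right hc])
      exact le_trans (hyS i) this
  -- Compact set K and minimizer of coordinate sum
  set K : Set (Fin n → ℝ) := Set.Icc 0 x0 ∩ {x | b ≤ tapp (m-1) n A x} with hKdef
  have hKc : IsCompact K := by
    apply IsCompact.inter_right isCompact_Icc
    have : {x : Fin n → ℝ | b ≤ tapp (m-1) n A x} = ⋂ i, {x | b i ≤ tapp (m-1) n A x i} := by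
      ext x; simp [Pi.le_def]
    rw [this]
    exact isClosed_iInter fun i =>
      isClosed_le continuous_const (tapp_continuous (m-1) n A i)
  have hKne : K.Nonempty := ⟨x0, ⟨hx00, le_refl x0⟩, hx0S⟩
  obtain ⟨xs, hxsK, hxsmin⟩ := hKc.exists_isMinOn hKne
    (Continuous.continuousOn (continuous_finset_sum _ fun i _ => continuous_apply i) :
      ContinuousOn (fun x : Fin n → ℝ => ∑ i, x i) K)
  have hxs0 : 0 ≤ xs := hxsK.1.1
  have hxsS : b ≤ tapp (m-1) n A xs := hxsK.2
  -- minimality over S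
  have hminS : ∀ y : Fin n → ℝ, 0 ≤ y → b ≤ tapp (m-1) n A y → xs ≤ y := by
    intro y hy hyS
    set z := xs ⊓ y with hzdef
    have hzS : b ≤ tapp (m-1) n A z := hmin xs y hxs0 hxsS hy hyS
    have hzxs : z ≤ xs := inf_le_left
    have hzK : z ∈ K := ⟨⟨le_inf hxs0 hy, le_trans hzxs hxsK.1.2⟩, hzS⟩
    have hsum : (∑ i, xs i) ≤ ∑ i, z i := hxsmin hzK
    have heq : ∀ i, z i = xs i := by
      by_contra hc
      push_neg at hc
      obtain ⟨i, hi⟩ := hc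
      have : (∑ j, z j) < ∑ j, xs j :=
        Finset.sum_lt_sum (fun j _ => hzxs j)
          ⟨i, Finset.mem_univ i, lt_of_le_of_ne (hzxs i) hi⟩
      linarith
    intro i
    calc xs i = z i := (heq i).symm
    _ ≤ y i := inf_le_right (a := xs i)
  -- equality
  have heqn : tapp (m-1) n A xs = b := by
    funext i
    by_cases hxi : xs i = 0
    · have h1 : tapp (m-1) n A xs i ≤ 0 := tapp_nonpos (m-1) n hp A hA xs hxs0 i hxi
      have h2 := hxsS i
      have hbi : (0:ℝ) ≤ b i := hb i
      linarith
    · by_contra hne'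
      have hlt : b i < tapp (m-1) n A xs i := lt_of_le_of_ne (hxsS i) (Ne.symm hne')
      have hxipos : 0 < xs i := lt_of_le_of_ne (hxs0 i) (Ne.symm hxi)
      set f : ℝ → ℝ := fun t => tapp (m-1) n A (Function.update xs i t) i with hfdef
      have hfc : Continuous f :=
        (tapp_continuous (m-1) n A i).comp (continuous_pi fun j => by
          by_cases hji : j = i
          · subst hji; simpa [Function.update_apply] using continuous_id'
          · simpa [Function.update_apply, hji] using continuous_const)
      have hfx : f (xs i) = tapp (m-1) n A xs i := by
        simp [hfdef, Function.update_eq_self]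
      have hnb : {t : ℝ | b i < f t} ∈ nhds (xs i) := by
        apply (hfc.continuousAt (x := xs i)).preimage_mem_nhds
        exact Ioi_mem_nhds (by rw [hfx]; exact hlt)
      obtain ⟨ε, hε, hball⟩ := Metric.mem_nhds_iff.mp hnb
      set t := xs i - min ε (xs i) / 2 with htdef
      have hmpos : 0 < min ε (xs i) := lt_min hε hxipos
      have ht0 : 0 < t := by
        have : min ε (xs i) ≤ xs i := min_le_right _ _
        simp only [htdef]; linarith
      have htlt : t < xs i := by simp only [htdef]; linarith
      have htball : t ∈ Metric.ball (xs i) ε := by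
        simp only [Metric.mem_ball, Real.dist_eq, htdef]
        have : min ε (xs i) ≤ ε := min_le_left _ _
        rw [abs_of_nonpos (by linarith)]
        linarith
      have htf : b i < f t := hball htball
      set x' := Function.update xs i t with hx'def
      have hx'le : x' ≤ xs := by
        intro j
        by_cases hji : j = i
        · subst hji; simp [hx'def, le_of_lt htlt]
        · simp [hx'def, Function.update_apply, hji]
      have hx'0 : 0 ≤ x' := by
        intro j
        by_cases hji : j = i
        · subst hji; simp [hx'def, le_of_lt ht0]
        · simp [hx'def, Function.update_apply, hji]; exact hxs0 j
      have hx'S : b ≤ tapp (m-1) n A x' := by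
        intro j
        by_cases hji : j = i
        · subst hji; exact le_of_lt htf
        · have := tapp_anti (m-1) n A hA xs x' hx'0 hx'le j
            (by simp [hx'def, Function.update_apply, hji])
          exact le_trans (hxsS j) this
      have := hminS x' hx'0 hx'S i
      rw [hx'def, Function.update_self] at this
      linarith
  exact ⟨xs, ⟨hxs0, hxsS⟩, hminS, heqn,
    fun y hy hyeq => hminS y hy (le_of_eq hyeq.symm)⟩

end
end

section
/- Let A be an mth-order n-dimensional Z-tensor with positive diagonal entries, written A = D − B with D the diagonal part and B ≥ 0, and let b ≥ 0. Define the Jacobi iteration x_{k+1} = (D^{-1}(B x_k^{m-1} + b))^{[1/(m-1)]} with x_0 = 0 (equivalently D x_{k+1}^{m-1} = B x_k^{m-1} + b). Then the sequence (x_k) is componentwise monotonically increasing, and x_k ≤ x for every x ≥ 0 with A x^{m-1} ≥ b. -/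
open Finset Filter

noncomputable section

lemma tapp_mono' (p n : ℕ) (B : Fin n → (Fin p → Fin n) → ℝ)
    (hB : ∀ i js, 0 ≤ B i js) {x y : Fin n → ℝ} (hx : 0 ≤ x) (hxy : x ≤ y) (i : Fin n) :
    tapp p n B x i ≤ tapp p n B y i := by
  apply Finset.sum_le_sum
  intro js _
  apply mul_le_mul_of_nonneg_left _ (hB i js)
  exact Finset.prod_le_prod (fun j _ => hx _) (fun j _ => hxy _)

lemma tapp_diag' (p n : ℕ) (A : Fin n → (Fin p → Fin n) → ℝ) (x : Fin n → ℝ) (i : Fin n) :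
    tapp p n (diagT p n A) x i = A i (fun _ => i) * x i ^ p := by
  unfold tapp diagT
  rw [Finset.sum_eq_single (fun _ => i : Fin p → Fin n)]
  · simp
  · intro js _ hjs
    have : ¬ ∀ j, js j = i := fun h => hjs (funext h)
    simp [this]
  · simp

lemma tapp_sub' (p n : ℕ) (C A : Fin n → (Fin p → Fin n) → ℝ) (x : Fin n → ℝ) (i : Fin n) :
    tapp p n (fun i js => C i js - A i js) x i = tapp p n C x i - tapp p n A x i := by
  simp [tapp, sub_mul, Finset.sum_sub_distrib]

/-- the Jacobi iteration `D x_{k+1}^{m-1} = B x_k^{m-1} + b`, `x₀ = 0`,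
for a Z-tensor `A = D − B` with positive diagonal and `b ≥ 0`, is monotonically
increasing and bounded above by every `x ≥ 0` with `A x^{m-1} ≥ b`. -/
theorem stmt1 (m n : ℕ) (hm : 2 ≤ m) (A : Fin n → (Fin (m-1) → Fin n) → ℝ)
    (hA : IsZTensor (m-1) n A) (hdiag : ∀ i, 0 < A i (fun _ => i))
    (b : Fin n → ℝ) (hb : 0 ≤ b)
    (x : ℕ → Fin n → ℝ) (hx0 : x 0 = 0)
    (hxpos : ∀ k, 0 ≤ x (k+1))
    (hiter : ∀ k i, A i (fun _ => i) * (x (k+1) i) ^ (m-1) =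
      tapp (m-1) n (fun i js => diagT (m-1) n A i js - A i js) (x k) i + b i) :
    (∀ k, x k ≤ x (k+1)) ∧
    ∀ z : Fin n → ℝ, 0 ≤ z → b ≤ tapp (m-1) n A z → ∀ k, x k ≤ z := by
  have hp0 : m - 1 ≠ 0 := by omega
  set B : Fin n → (Fin (m-1) → Fin n) → ℝ :=
    fun i js => diagT (m-1) n A i js - A i js with hBdef
  have hBnn : ∀ i js, 0 ≤ B i js := by
    intro i js
    by_cases h : ∀ j, js j = i
    · have hjs : js = fun _ => i := funext h
      simp [hBdef, diagT, h, hjs]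
    · push_neg at h
      have h1 : A i js ≤ 0 := hA i js h
      have h2 : diagT (m-1) n A i js = 0 := by
        unfold diagT
        rw [if_neg]
        push_neg
        exact h
      simp only [hBdef, h2]
      linarith
  have hxnn : ∀ k, 0 ≤ x k := by
    intro k
    cases k with
    | zero => rw [hx0]
    | succ k => exact hxpos k
  have mono : ∀ k, x k ≤ x (k+1) := by
    intro k
    induction k with
    | zero => rw [hx0]; exact hxpos 0
    | succ k ih =>
      intro i
      have h1 := hiter k i
      have h2 := hiter (k+1) i
      have hm1 : tapp (m-1) n B (x k) i ≤ tapp (m-1) n B (x (k+1)) i :=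
        tapp_mono' (m-1) n B hBnn (hxnn k) ih i
      have hle : A i (fun _ => i) * x (k+1) i ^ (m-1)
          ≤ A i (fun _ => i) * x (k+1+1) i ^ (m-1) := by
        rw [h1, h2]; linarith
      have hpow := (mul_le_mul_iff_right₀ (hdiag i)).mp hle
      exact (pow_le_pow_iff_left₀ (hxpos k i) (hxpos (k+1) i) hp0).mp hpow
  refine ⟨mono, ?_⟩
  intro z hz hzb k
  induction k with
  | zero => rw [hx0]; exact hz
  | succ k ih =>
    intro i
    have h1 := hiter k i
    have hm1 : tapp (m-1) n B (x k) i ≤ tapp (m-1) n B z i :=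
      tapp_mono' (m-1) n B hBnn (hxnn k) ih i
    have hBz : tapp (m-1) n B z i = A i (fun _ => i) * z i ^ (m-1) - tapp (m-1) n A z i := by
      rw [show tapp (m-1) n B z i
            = tapp (m-1) n (diagT (m-1) n A) z i - tapp (m-1) n A z i from
          tapp_sub' (m-1) n (diagT (m-1) n A) A z i, tapp_diag']
    have hpow : x (k+1) i ^ (m-1) ≤ z i ^ (m-1) := by
      have hle : A i (fun _ => i) * x (k+1) i ^ (m-1) ≤ A i (fun _ => i) * z i ^ (m-1) := by
        rw [h1]
        have := hzb i
        rw [hBz] at hm1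
        simp only [Pi.le_def] at this ⊢
        linarith
      exact (mul_le_mul_iff_right₀ (hdiag i)).mp hle
    exact (pow_le_pow_iff_left₀ (hxpos k i) (hz i) hp0).mp hpow


end
end

section
/- Let A be a nonsingular M-tensor and suppose S_l = {x ≥ 0 : A x^{m-1} ≤ b} is nonempty. Then S_l has a maximal element x* which is also the maximal nonnegative solution of A x^{m-1} = b; i.e., A (x*)^{m-1} = b and x ≤ x* for every x ∈ S_l. -/
open Finset Filter

noncomputable section

namespace Stmt5Aux

open Finset Filter

variable {p n : ℕ}

lemma tapp_cont (B : Fin n → (Fin p → Fin n) → ℝ) (i : Fin n) :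
    Continuous fun x : Fin n → ℝ => tapp p n B x i := by
  unfold tapp
  exact continuous_finset_sum _ fun js _ => (continuous_const.mul
    (continuous_finset_prod _ fun j _ => continuous_apply (js j)))

lemma tapp_nonneg {B : Fin n → (Fin p → Fin n) → ℝ} (hB : ∀ i js, 0 ≤ B i js)
    {x : Fin n → ℝ} (hx : 0 ≤ x) (i : Fin n) : 0 ≤ tapp p n B x i :=
  Finset.sum_nonneg fun js _ => mul_nonneg (hB i js) (Finset.prod_nonneg fun j _ => hx (js j))

lemma tapp_mono {B : Fin n → (Fin p → Fin n) → ℝ} (hB : ∀ i js, 0 ≤ B i js)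
    {x y : Fin n → ℝ} (hx : 0 ≤ x) (hxy : x ≤ y) (i : Fin n) :
    tapp p n B x i ≤ tapp p n B y i := by
  refine Finset.sum_le_sum fun js _ => mul_le_mul_of_nonneg_left ?_ (hB i js)
  exact Finset.prod_le_prod (fun j _ => hx (js j)) (fun j _ => hxy (js j))

lemma tapp_entries_mono {B C : Fin n → (Fin p → Fin n) → ℝ} (hBC : ∀ i js, B i js ≤ C i js)
    {x : Fin n → ℝ} (hx : 0 ≤ x) (i : Fin n) : tapp p n B x i ≤ tapp p n C x i :=
  Finset.sum_le_sum fun js _ => mul_le_mul_of_nonneg_right (hBC i js)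
    (Finset.prod_nonneg fun j _ => hx (js j))

lemma tapp_smul (B : Fin n → (Fin p → Fin n) → ℝ) (c : ℝ) (x : Fin n → ℝ) (i : Fin n) :
    tapp p n B (fun j => c * x j) i = c ^ p * tapp p n B x i := by
  unfold tapp
  rw [Finset.mul_sum]
  refine Finset.sum_congr rfl fun js _ => ?_
  rw [Finset.prod_mul_distrib, Finset.prod_const, card_univ, Fintype.card_fin]
  ring

lemma sum_prod_eq (x : Fin n → ℝ) :
    ∑ js : Fin p → Fin n, ∏ j, x (js j) = (∑ i, x i) ^ p := by
  have h : (∑ i, x i) ^ p = ∏ _j : Fin p, ∑ i, x i := by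
    rw [Finset.prod_const, card_univ, Fintype.card_fin]
  rw [h, Finset.prod_univ_sum, Fintype.piFinset_univ]

lemma tapp_identT (x : Fin n → ℝ) (i : Fin n) :
    tapp p n (identT p n) x i = x i ^ p := by
  unfold tapp identT
  rw [Finset.sum_congr rfl (fun js _ => show
      (if ∀ j, js j = i then (1:ℝ) else 0) * ∏ j, x (js j)
      = if js = (fun _ => i) then ∏ j, x (js j) else 0 by
    simp only [funext_iff]
    split_ifs <;> simp)]
  rw [Finset.sum_ite_eq' univ (fun _ => i) (fun js => ∏ j, x (js j))]
  simp [Finset.prod_const]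

lemma tapp_sub (s : ℝ) (B A : Fin n → (Fin p → Fin n) → ℝ)
    (hAe : ∀ i js, A i js = s * identT p n i js - B i js) (x : Fin n → ℝ) (i : Fin n) :
    tapp p n A x i = s * x i ^ p - tapp p n B x i := by
  unfold tapp
  rw [← tapp_identT (p := p) x i]
  unfold tapp
  rw [Finset.mul_sum, ← Finset.sum_sub_distrib]
  refine Finset.sum_congr rfl fun js _ => ?_
  rw [hAe i js]; ring

lemma spec_bddAbove (B : Fin n → (Fin p → Fin n) → ℝ) (hB : ∀ i js, 0 ≤ B i js) :
    BddAbove {r : ℝ | ∃ lam : ℝ, ∃ x : Fin n → ℝ, x ≠ 0 ∧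
      (∀ i, tapp p n B x i = lam * x i ^ p) ∧ r = |lam|} := by
  refine ⟨∑ i, ∑ js, B i js, fun r hr => ?_⟩
  obtain ⟨lam, x, hx, heig, rfl⟩ := hr
  have hne : (univ : Finset (Fin n)).Nonempty := by
    rcases Nat.eq_zero_or_pos n with h | h
    · exfalso
      apply hx
      funext i
      subst h
      exact i.elim0
    · exact Finset.univ_nonempty_iff.mpr ⟨⟨0, h⟩⟩
  obtain ⟨i0, -, hi0⟩ := Finset.exists_max_image univ (fun i => |x i|) hne
  have hM : 0 < |x i0| := by
    rcases lt_or_eq_of_le (abs_nonneg (x i0)) with h | h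
    · exact h
    · exfalso; apply hx; funext i
      have := hi0 i (mem_univ i)
      rw [← h] at this
      simpa using le_antisymm this (abs_nonneg _)
  have key : |lam| * |x i0| ^ p ≤ (∑ js, B i0 js) * |x i0| ^ p := by
    have h1 : |lam| * |x i0| ^ p = |tapp p n B x i0| := by
      rw [heig i0, abs_mul, abs_pow]
    rw [h1]
    calc |tapp p n B x i0| ≤ ∑ js, |B i0 js * ∏ j, x (js j)| := Finset.abs_sum_le_sum_abs _ _
      _ ≤ ∑ js, B i0 js * |x i0| ^ p := by
          refine Finset.sum_le_sum fun js _ => ?_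
          rw [abs_mul, abs_of_nonneg (hB i0 js)]
          refine mul_le_mul_of_nonneg_left ?_ (hB i0 js)
          rw [abs_prod]
          calc ∏ j, |x (js j)| ≤ ∏ _j : Fin p, |x i0| :=
                Finset.prod_le_prod (fun j _ => abs_nonneg _) (fun j _ => hi0 (js j) (mem_univ _))
            _ = |x i0| ^ p := by rw [Finset.prod_const, card_univ, Fintype.card_fin]
      _ = (∑ js, B i0 js) * |x i0| ^ p := by rw [Finset.sum_mul]
  have h2 : |lam| ≤ ∑ js, B i0 js :=
    le_of_mul_le_mul_right (by simpa [mul_comm] using key) (pow_pos hM p)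
  exact h2.trans (Finset.single_le_sum (f := fun i => ∑ js, B i js)
    (fun i _ => Finset.sum_nonneg fun js _ => hB i js) (mem_univ i0))

lemma pos_eig (hp : p ≠ 0) (hn : 0 < n) (C : Fin n → (Fin p → Fin n) → ℝ)
    (δ : ℝ) (hδ : 0 < δ) (hC : ∀ i js, δ ≤ C i js) :
    ∃ lam : ℝ, ∃ v : Fin n → ℝ, 0 < lam ∧ (∀ i, 0 < v i) ∧ (∀ i, v i ≤ 1) ∧
      (1 ≤ ∑ i, v i) ∧ ∀ i, tapp p n C v i = lam * v i ^ p := by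
  haveI : NeZero n := ⟨hn.ne'⟩
  have huniv : (univ : Finset (Fin n)).Nonempty := univ_nonempty
  set R : ℝ := ∑ i, ∑ js, C i js with hR
  have hCnn : ∀ i js, 0 ≤ C i js := fun i js => hδ.le.trans (hC i js)
  have hrow : ∀ i, ∑ js, C i js ≤ R :=
    fun i => Finset.single_le_sum (f := fun i => ∑ js, C i js)
      (fun i _ => Finset.sum_nonneg fun js _ => hCnn i js) (mem_univ i)
  have hrowpos : ∀ i, 0 < ∑ js, C i js := fun i =>
    lt_of_lt_of_le (hδ.trans_le (hC i (fun _ => 0)))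
      (Finset.single_le_sum (fun js _ => hCnn i js) (mem_univ _))
  have hRpos : 0 < R := (hrowpos 0).trans_le (hrow 0)
  -- the feasible set
  set T : Set (ℝ × (Fin n → ℝ)) := {q | q.1 ∈ Set.Icc 0 R ∧ q.2 ∈ Set.Icc 0 1 ∧
    1 ≤ ∑ i, q.2 i ∧ ∀ i, tapp p n C q.2 i ≤ q.1 * q.2 i ^ p} with hT
  have hTclosed : IsClosed T := by
    have h1 : IsClosed {q : ℝ × (Fin n → ℝ) | q.1 ∈ Set.Icc 0 R} :=
      isClosed_Icc.preimage continuous_fst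
    have h2 : IsClosed {q : ℝ × (Fin n → ℝ) | q.2 ∈ Set.Icc 0 1} :=
      isClosed_Icc.preimage continuous_snd
    have h3 : IsClosed {q : ℝ × (Fin n → ℝ) | 1 ≤ ∑ i, q.2 i} :=
      isClosed_le continuous_const
        (continuous_finset_sum _ fun i _ => (continuous_apply i).comp continuous_snd)
    have h4 : ∀ i, IsClosed {q : ℝ × (Fin n → ℝ) | tapp p n C q.2 i ≤ q.1 * q.2 i ^ p} :=
      fun i => isClosed_le ((tapp_cont C i).comp continuous_snd)
        (continuous_fst.mul (((continuous_apply i).comp continuous_snd).pow p))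
    have : T = {q : ℝ × (Fin n → ℝ) | q.1 ∈ Set.Icc 0 R} ∩
        ({q | q.2 ∈ Set.Icc 0 1} ∩ ({q | 1 ≤ ∑ i, q.2 i} ∩
          ⋂ i, {q : ℝ × (Fin n → ℝ) | tapp p n C q.2 i ≤ q.1 * q.2 i ^ p})) := by
      ext q; simp only [hT, Set.mem_setOf_eq, Set.mem_inter_iff, Set.mem_iInter]
    rw [this]
    exact h1.inter (h2.inter (h3.inter (isClosed_iInter h4)))
  have hTcomp : IsCompact T := by
    refine IsCompact.of_isClosed_subset
      ((isCompact_Icc (a := (0:ℝ)) (b := R)).prod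
        (isCompact_Icc (a := (0:Fin n → ℝ)) (b := 1))) hTclosed ?_
    intro q hq
    exact Set.mem_prod.mpr ⟨hq.1, hq.2.1⟩
  have hTne : T.Nonempty := by
    refine ⟨(R, fun _ => 1), ⟨Set.mem_Icc.mpr ⟨hRpos.le, le_rfl⟩, ?_, ?_, ?_⟩⟩
    · exact ⟨fun i => zero_le_one, fun i => le_rfl⟩
    · simp [Finset.card_univ]
      exact_mod_cast hn
    · intro i
      have : tapp p n C (fun _ => 1) i = ∑ js, C i js := by
        unfold tapp; simp
      rw [this]
      simpa using hrow i
  obtain ⟨q, hqT, hmin⟩ := hTcomp.exists_isMinOn hTne continuous_fst.continuousOn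
  obtain ⟨hq1, hq2, hqsum, hqineq⟩ := hqT
  set lam := q.1 with hlam
  set v := q.2 with hv
  have hv0 : ∀ i, 0 ≤ v i := fun i => hq2.1 i
  have hv1 : ∀ i, v i ≤ 1 := fun i => hq2.2 i
  -- some coordinate is at least 1/n
  obtain ⟨j, hj⟩ : ∃ j, (1:ℝ)/n ≤ v j := by
    by_contra h
    push_neg at h
    have : ∑ i, v i < ∑ _i : Fin n, (1:ℝ)/n :=
      Finset.sum_lt_sum_of_nonempty huniv fun i _ => h i
    rw [Finset.sum_const, card_univ, Fintype.card_fin, nsmul_eq_mul] at this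
    rw [mul_one_div, div_self (by exact_mod_cast hn.ne' : (n:ℝ) ≠ 0)] at this
    linarith [hqsum]
  have hinv : (0:ℝ) < 1/n := by positivity
  set α : ℝ := δ * ((1:ℝ)/n) ^ p with hα
  have hαpos : 0 < α := by positivity
  have hlow : ∀ i, α ≤ tapp p n C v i := by
    intro i
    have hterm : α ≤ C i (fun _ => j) * ∏ _j : Fin p, v j := by
      have : ((1:ℝ)/n) ^ p ≤ ∏ _j : Fin p, v j := by
        rw [Finset.prod_const, card_univ, Fintype.card_fin]
        exact pow_le_pow_left₀ hinv.le hj p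
      calc α ≤ δ * ∏ _j : Fin p, v j := mul_le_mul_of_nonneg_left this hδ.le
        _ ≤ C i (fun _ => j) * ∏ _j : Fin p, v j :=
            mul_le_mul_of_nonneg_right (hC i _) (Finset.prod_nonneg fun _ _ => hv0 j)
    refine hterm.trans ?_
    exact Finset.single_le_sum (f := fun js => C i js * ∏ j', v (js j'))
      (fun js _ => mul_nonneg (hCnn i js) (Finset.prod_nonneg fun _ _ => hv0 _)) (mem_univ _)
  have hlampos : 0 < lam := by
    by_contra h
    push_neg at h
    have h1 := (hlow 0).trans (hqineq 0)
    nlinarith [pow_nonneg (hv0 0) p, hαpos]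
  have hvpos : ∀ i, 0 < v i := by
    intro i
    rcases (hv0 i).lt_or_eq with h | h
    · exact h
    · exfalso
      have h1 := (hlow i).trans (hqineq i)
      rw [← h, zero_pow hp, mul_zero] at h1
      linarith
  -- equality must hold
  have heq : ∀ i, tapp p n C v i = lam * v i ^ p := by
    by_contra h
    push_neg at h
    obtain ⟨i0, hi0⟩ := h
    have hlt : tapp p n C v i0 < lam * v i0 ^ p := lt_of_le_of_ne (hqineq i0) hi0
    -- choose small ε > 0
    obtain ⟨ε, hε0, hεv, hε3⟩ : ∃ ε : ℝ, 0 < ε ∧ ε < v i0 ∧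
        tapp p n C v i0 < lam * (v i0 - ε) ^ p := by
      have hopen : IsOpen {t : ℝ | tapp p n C v i0 < lam * (v i0 - t) ^ p} :=
        isOpen_lt continuous_const (continuous_const.mul ((continuous_const.sub continuous_id).pow p))
      have h0mem : (0:ℝ) ∈ {t : ℝ | tapp p n C v i0 < lam * (v i0 - t) ^ p} := by
        simpa using hlt
      obtain ⟨r, hr0, hball⟩ := Metric.isOpen_iff.1 hopen 0 h0mem
      have hvi0 := hvpos i0
      refine ⟨min (r/2) (v i0 / 2), lt_min (by linarith) (by linarith), ?_, ?_⟩
      · have := hvpos i0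
        calc min (r/2) (v i0/2) ≤ v i0/2 := min_le_right _ _
          _ < v i0 := by linarith
      · apply hball
        rw [Metric.mem_ball, Real.dist_eq, sub_zero,
          abs_of_pos (lt_min (by linarith) (by linarith))]
        calc min (r/2) (v i0/2) ≤ r/2 := min_le_left _ _
          _ < r := by linarith
    set v' := Function.update v i0 (v i0 - ε) with hv'
    have hv'le : ∀ k, v' k ≤ v k := by
      intro k
      rcases eq_or_ne k i0 with rfl | hk
      · rw [hv', Function.update_self]; linarith
      · rw [hv', Function.update_of_ne hk]
    have hv'pos : ∀ k, 0 < v' k := by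
      intro k
      rcases eq_or_ne k i0 with rfl | hk
      · rw [hv', Function.update_self]; linarith
      · rw [hv', Function.update_of_ne hk]; exact hvpos k
    have hdec : ∀ k, tapp p n C v' k < tapp p n C v k := by
      intro k
      refine Finset.sum_lt_sum (fun js _ => ?_) ⟨(fun _ => i0), mem_univ _, ?_⟩
      · refine mul_le_mul_of_nonneg_left ?_ (hCnn k js)
        exact Finset.prod_le_prod (fun j' _ => (hv'pos _).le) (fun j' _ => hv'le _)
      · refine mul_lt_mul_of_pos_left ?_ (hδ.trans_le (hC k _))
        have hupd : v' i0 = v i0 - ε := by rw [hv', Function.update_self]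
        have h1 : (∏ _j' : Fin p, v' i0) < ∏ _j' : Fin p, v i0 := by
          rw [Finset.prod_const, Finset.prod_const, card_univ, Fintype.card_fin, hupd]
          exact pow_lt_pow_left₀ (by linarith) (by linarith) hp
        simpa using h1
    have hstrict : ∀ k, tapp p n C v' k < lam * v' k ^ p := by
      intro k
      rcases eq_or_ne k i0 with rfl | hk
      · have : tapp p n C v' k ≤ tapp p n C v k := (hdec k).le
        calc tapp p n C v' k ≤ tapp p n C v k := this
          _ < lam * (v k - ε) ^ p := hε3
          _ = lam * v' k ^ p := by rw [hv', Function.update_self]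
      · calc tapp p n C v' k < tapp p n C v k := hdec k
          _ ≤ lam * v k ^ p := hqineq k
          _ = lam * v' k ^ p := by rw [hv', Function.update_of_ne hk]
    set t' : ℝ := univ.sup' huniv (fun k => tapp p n C v' k / v' k ^ p) with ht'
    have ht'lt : t' < lam := by
      rw [ht', Finset.sup'_lt_iff]
      intro k _
      rw [div_lt_iff₀ (pow_pos (hv'pos k) p)]
      exact hstrict k
    have hratio : ∀ k, tapp p n C v' k ≤ t' * v' k ^ p := by
      intro k
      have h1 : tapp p n C v' k / v' k ^ p ≤ t' :=
        Finset.le_sup' (fun k => tapp p n C v' k / v' k ^ p) (mem_univ k)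
      rwa [div_le_iff₀ (pow_pos (hv'pos k) p)] at h1
    set t'' : ℝ := max t' 0 with ht''
    have ht''lt : t'' < lam := max_lt ht'lt hlampos
    have hratio'' : ∀ k, tapp p n C v' k ≤ t'' * v' k ^ p := fun k =>
      (hratio k).trans (mul_le_mul_of_nonneg_right (le_max_left _ _)
        (pow_nonneg (hv'pos k).le p))
    set M : ℝ := univ.sup' huniv v' with hM
    have hMpos : 0 < M := lt_of_lt_of_le (hv'pos 0) (Finset.le_sup' v' (mem_univ 0))
    have hM1 : M ≤ 1 := Finset.sup'_le _ _ fun k _ => (hv'le k).trans (hv1 k)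
    set w : Fin n → ℝ := fun k => (1/M) * v' k with hw
    have hwnn : ∀ k, 0 ≤ w k := fun k => mul_nonneg (by positivity) (hv'pos k).le
    have hwle1 : ∀ k, w k ≤ 1 := by
      intro k
      show (1/M) * v' k ≤ 1
      have h1 : v' k ≤ M := Finset.le_sup' v' (mem_univ k)
      calc (1/M) * v' k ≤ (1/M) * M := mul_le_mul_of_nonneg_left h1 (by positivity)
        _ = 1 := by field_simp
    obtain ⟨k1, -, hk1⟩ := Finset.exists_mem_eq_sup' huniv v'
    have hwk1 : w k1 = 1 := by
      show (1/M) * v' k1 = 1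
      rw [← hk1]
      field_simp
      exact hM.symm
    have hwsum : 1 ≤ ∑ k, w k := by
      calc (1:ℝ) = w k1 := hwk1.symm
        _ ≤ ∑ k, w k := Finset.single_le_sum (fun k _ => hwnn k) (mem_univ k1)
    have hwineq : ∀ i, tapp p n C w i ≤ t'' * w i ^ p := by
      intro i
      show tapp p n C (fun k => (1/M) * v' k) i ≤ t'' * ((1/M) * v' i) ^ p
      rw [tapp_smul]
      calc (1/M)^p * tapp p n C v' i ≤ (1/M)^p * (t'' * v' i ^ p) :=
            mul_le_mul_of_nonneg_left (hratio'' i) (by positivity)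
        _ = t'' * ((1/M) * v' i) ^ p := by rw [mul_pow]; ring
    have hmem : (t'', w) ∈ T :=
      ⟨⟨le_max_right _ _, (ht''lt.le.trans hq1.2)⟩, ⟨fun k => hwnn k, fun k => hwle1 k⟩,
        hwsum, hwineq⟩
    have hcon := hmin hmem
    exact absurd hcon (not_le.mpr ht''lt)
  exact ⟨lam, v, hlampos, hvpos, hv1, hqsum, heq⟩

lemma collatz (hp : p ≠ 0) {C : Fin n → (Fin p → Fin n) → ℝ} (hC : ∀ i js, 0 ≤ C i js)
    {u : Fin n → ℝ} (hu : 0 ≤ u) (hune : u ≠ 0) {s : ℝ}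
    (hsu : ∀ i, s * u i ^ p ≤ tapp p n C u i)
    {lam : ℝ} {v : Fin n → ℝ} (hv : ∀ i, 0 < v i)
    (heig : ∀ i, tapp p n C v i = lam * v i ^ p) : s ≤ lam := by
  haveI : NeZero n := by
    rcases Nat.eq_zero_or_pos n with h | h
    · exfalso; apply hune; funext i; subst h; exact i.elim0
    · exact ⟨h.ne'⟩
  have huniv : (univ : Finset (Fin n)).Nonempty := univ_nonempty
  set t : ℝ := univ.sup' huniv (fun i => u i / v i) with ht
  obtain ⟨i1, -, hi1⟩ := Finset.exists_mem_eq_sup' huniv (fun i => u i / v i)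
  have hut : ∀ i, u i ≤ t * v i := by
    intro i
    have h1 : u i / v i ≤ t := Finset.le_sup' (fun i => u i / v i) (mem_univ i)
    rwa [div_le_iff₀ (hv i)] at h1
  have hui1 : u i1 = t * v i1 := by
    have : t = u i1 / v i1 := hi1
    rw [this, div_mul_cancel₀]
    exact (hv i1).ne'
  have htpos : 0 < t := by
    obtain ⟨j, hj⟩ : ∃ j, 0 < u j := by
      by_contra h
      push_neg at h
      exact hune (funext fun j => le_antisymm (h j) (hu j))
    have h1 : u j / v j ≤ t := Finset.le_sup' (fun i => u i / v i) (mem_univ j)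
    exact lt_of_lt_of_le (div_pos hj (hv j)) h1
  have hkey : s * u i1 ^ p ≤ lam * u i1 ^ p := by
    calc s * u i1 ^ p ≤ tapp p n C u i1 := hsu i1
      _ ≤ tapp p n C (fun j => t * v j) i1 := tapp_mono hC hu (fun i => hut i) i1
      _ = t ^ p * tapp p n C v i1 := tapp_smul C t v i1
      _ = t ^ p * (lam * v i1 ^ p) := by rw [heig i1]
      _ = lam * (t * v i1) ^ p := by rw [mul_pow]; ring
      _ = lam * u i1 ^ p := by rw [← hui1]
  have hpos : 0 < u i1 ^ p := by
    rw [hui1]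
    exact pow_pos (mul_pos htpos (hv i1)) p
  exact le_of_mul_le_mul_right (by simpa [mul_comm] using hkey) hpos

lemma pf (hp : p ≠ 0) (hn : 0 < n) (B : Fin n → (Fin p → Fin n) → ℝ)
    (hB : ∀ i js, 0 ≤ B i js) (s : ℝ) (hs : 0 < s) (u : Fin n → ℝ) (hu : 0 ≤ u)
    (hune : u ≠ 0) (hsu : ∀ i, s * u i ^ p ≤ tapp p n B u i) :
    ∃ lam : ℝ, ∃ x : Fin n → ℝ, x ≠ 0 ∧ (∀ i, tapp p n B x i = lam * x i ^ p) ∧ s ≤ |lam| := by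
  haveI : NeZero n := ⟨hn.ne'⟩
  -- perturbed tensors
  set Cf : ℕ → (Fin n → (Fin p → Fin n) → ℝ) := fun k => fun i js => B i js + 1/(k+1) with hCf
  have hCpos : ∀ k i js, (1:ℝ)/(k+1) ≤ Cf k i js := fun k i js => by
    simpa [hCf] using hB i js
  have hCB : ∀ k i js, B i js ≤ Cf k i js := fun k i js => by
    have : (0:ℝ) < 1/((k:ℝ)+1) := by positivity
    simp [hCf]; positivity
  -- eigenpairs for each k
  have hex : ∀ k : ℕ, ∃ lam : ℝ, ∃ v : Fin n → ℝ, 0 < lam ∧ (∀ i, 0 < v i) ∧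
      (∀ i, v i ≤ 1) ∧ (1 ≤ ∑ i, v i) ∧ ∀ i, tapp p n (Cf k) v i = lam * v i ^ p :=
    fun k => pos_eig hp hn (Cf k) (1/(k+1)) (by positivity) (hCpos k)
  choose lamf vf hlampos hvpos hvle1 hvsum heigf using hex
  -- lower bound lam_k ≥ s
  have hlams : ∀ k, s ≤ lamf k := by
    intro k
    refine collatz hp (fun i js => (hB i js).trans (hCB k i js)) hu hune
      (fun i => (hsu i).trans (tapp_entries_mono (hCB k) hu i)) (hvpos k) (heigf k)
  -- upper bound
  set R2 : ℝ := (∑ i, ∑ js, (B i js + 1)) * (n:ℝ) ^ p with hR2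
  have hlamub : ∀ k, lamf k ≤ R2 := by
    intro k
    -- some coordinate of vf k at least 1/n
    obtain ⟨j, hj⟩ : ∃ j, (1:ℝ)/n ≤ vf k j := by
      by_contra h
      push_neg at h
      have h1 : ∑ i, vf k i < ∑ _i : Fin n, (1:ℝ)/n :=
        Finset.sum_lt_sum_of_nonempty univ_nonempty fun i _ => h i
      rw [Finset.sum_const, card_univ, Fintype.card_fin, nsmul_eq_mul, mul_one_div,
        div_self (by exact_mod_cast hn.ne' : (n:ℝ) ≠ 0)] at h1
      linarith [hvsum k]
    have h0 : lamf k * vf k j ^ p = tapp p n (Cf k) (vf k) j := (heigf k j).symm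
    have h1 : tapp p n (Cf k) (vf k) j ≤ ∑ js, (B j js + 1) := by
      have : ∀ js : Fin p → Fin n, Cf k j js * ∏ j', vf k (js j') ≤ B j js + 1 := by
        intro js
        have hc : Cf k j js ≤ B j js + 1 := by
          simp only [hCf]
          have : (1:ℝ)/((k:ℝ)+1) ≤ 1 := by
            rw [div_le_one (by positivity)]; linarith [Nat.cast_nonneg (α := ℝ) k]
          linarith
        have hprod : ∏ j', vf k (js j') ≤ 1 :=
          Finset.prod_le_one (fun j' _ => (hvpos k (js j')).le) (fun j' _ => hvle1 k (js j'))
        have hcnn : 0 ≤ Cf k j js := le_trans (by positivity) (hCpos k j js)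
        calc Cf k j js * ∏ j', vf k (js j') ≤ Cf k j js * 1 :=
              mul_le_mul_of_nonneg_left hprod hcnn
          _ = Cf k j js := mul_one _
          _ ≤ B j js + 1 := hc
      exact Finset.sum_le_sum fun js _ => this js
    have h2 : ∑ js, (B j js + 1) ≤ ∑ i, ∑ js, (B i js + 1) :=
      Finset.single_le_sum (f := fun i => ∑ js, (B i js + 1))
        (fun i _ => Finset.sum_nonneg fun js _ => by linarith [hB i js]) (mem_univ j)
    have h3 : lamf k * ((1:ℝ)/n) ^ p ≤ lamf k * vf k j ^ p :=
      mul_le_mul_of_nonneg_left (pow_le_pow_left₀ (by positivity) hj p) (hlampos k).le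
    have h4 : lamf k * ((1:ℝ)/n) ^ p ≤ ∑ i, ∑ js, (B i js + 1) := by
      calc lamf k * ((1:ℝ)/n) ^ p ≤ lamf k * vf k j ^ p := h3
        _ = tapp p n (Cf k) (vf k) j := h0
        _ ≤ ∑ js, (B j js + 1) := h1
        _ ≤ ∑ i, ∑ js, (B i js + 1) := h2
    have hnp : ((1:ℝ)/n) ^ p = ((n:ℝ) ^ p)⁻¹ := by
      rw [one_div, inv_pow]
    rw [hnp] at h4
    have hnppos : (0:ℝ) < (n:ℝ) ^ p := by positivity
    calc lamf k = lamf k * ((n:ℝ)^p)⁻¹ * (n:ℝ)^p := by field_simp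
      _ ≤ (∑ i, ∑ js, (B i js + 1)) * (n:ℝ)^p :=
          mul_le_mul_of_nonneg_right h4 hnppos.le
  -- compactness
  set K : Set (ℝ × (Fin n → ℝ)) := Set.Icc s R2 ×ˢ Set.Icc 0 1 with hK
  have hKcomp : IsCompact K :=
    (isCompact_Icc (a := s) (b := R2)).prod (isCompact_Icc (a := (0:Fin n → ℝ)) (b := 1))
  have hmemK : ∀ k, (lamf k, vf k) ∈ K := fun k =>
    ⟨⟨hlams k, hlamub k⟩, ⟨fun i => (hvpos k i).le, fun i => hvle1 k i⟩⟩
  obtain ⟨⟨lam, v⟩, hlvK, φ, hφ, hconv⟩ := hKcomp.tendsto_subseq hmemK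
  have hconv1 : Tendsto (fun k => lamf (φ k)) atTop (nhds lam) :=
    (continuous_fst.tendsto _).comp hconv
  have hconv2 : Tendsto (fun k => vf (φ k)) atTop (nhds v) :=
    (continuous_snd.tendsto _).comp hconv
  have hεlim : Tendsto (fun k : ℕ => (1:ℝ)/((φ k : ℝ)+1)) atTop (nhds 0) := by
    have h1 : Tendsto (fun k : ℕ => ((φ k : ℝ)+1)) atTop atTop := by
      apply tendsto_atTop_mono (fun k => ?_) (tendsto_natCast_atTop_atTop (R := ℝ))
      have h2 : k ≤ φ k := hφ.le_apply
      have h3 : (k:ℝ) ≤ (φ k : ℝ) := by exact_mod_cast h2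
      linarith
    simpa [Pi.inv_def] using h1.inv_tendsto_atTop
  -- eigen equation in the limit
  have heiglim : ∀ i, tapp p n B v i = lam * v i ^ p := by
    intro i
    have hsplit : ∀ k, tapp p n (Cf k) (vf k) i
        = tapp p n B (vf k) i + 1/((k:ℝ)+1) * (∑ j, vf k j) ^ p := by
      intro k
      unfold tapp
      rw [← sum_prod_eq (x := vf k), Finset.mul_sum, ← Finset.sum_add_distrib]
      refine Finset.sum_congr rfl fun js _ => ?_
      simp only [hCf]
      ring
    have hL : Tendsto (fun k => tapp p n B (vf (φ k)) i + 1/((φ k : ℝ)+1) * (∑ j, vf (φ k) j) ^ p)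
        atTop (nhds (tapp p n B v i)) := by
      have t1 : Tendsto (fun k => tapp p n B (vf (φ k)) i) atTop (nhds (tapp p n B v i)) :=
        ((tapp_cont B i).tendsto _).comp hconv2
      have t2 : Tendsto (fun k => (∑ j, vf (φ k) j) ^ p) atTop (nhds ((∑ j, v j) ^ p)) := by
        have : Continuous fun x : Fin n → ℝ => (∑ j, x j) ^ p :=
          (continuous_finset_sum _ fun j _ => continuous_apply j).pow p
        exact (this.tendsto _).comp hconv2
      have t3 : Tendsto (fun k => 1/((φ k : ℝ)+1) * (∑ j, vf (φ k) j) ^ p) atTop (nhds 0) := by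
        have := hεlim.mul t2
        simpa using this
      simpa using t1.add t3
    have hR : Tendsto (fun k => lamf (φ k) * vf (φ k) i ^ p) atTop (nhds (lam * v i ^ p)) := by
      have t4 : Tendsto (fun k => vf (φ k) i ^ p) atTop (nhds (v i ^ p)) :=
        (((continuous_apply i).pow p).tendsto _).comp hconv2
      exact hconv1.mul t4
    have heq : ∀ k, tapp p n B (vf (φ k)) i + 1/((φ k : ℝ)+1) * (∑ j, vf (φ k) j) ^ p
        = lamf (φ k) * vf (φ k) i ^ p := by
      intro k
      rw [← hsplit (φ k)]
      exact heigf (φ k) i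
    have := tendsto_nhds_unique (hL.congr heq) hR
    exact this
  -- v ≠ 0
  have hvsumlim : 1 ≤ ∑ i, v i := by
    have t5 : Tendsto (fun k => ∑ j, vf (φ k) j) atTop (nhds (∑ j, v j)) :=
      ((continuous_finset_sum _ fun j _ => continuous_apply j).tendsto _).comp hconv2
    exact ge_of_tendsto t5 (Eventually.of_forall fun k => hvsum (φ k))
  have hvne : v ≠ 0 := by
    intro h
    rw [h] at hvsumlim
    simp at hvsumlim
    linarith
  have hslam : s ≤ lam := hlvK.1.1
  exact ⟨lam, v, hvne, heiglim, hslam.trans (le_abs_self lam)⟩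

lemma main (p n : ℕ) (hp : p ≠ 0) (A : Fin n → (Fin p → Fin n) → ℝ)
    (s : ℝ) (B : Fin n → (Fin p → Fin n) → ℝ) (hB : ∀ i js, 0 ≤ B i js)
    (hrho : tensorSpecRad p n B < s)
    (hAe : ∀ i js, A i js = s * identT p n i js - B i js)
    (b : Fin n → ℝ)
    (hne : ∃ x : Fin n → ℝ, 0 ≤ x ∧ tapp p n A x ≤ b) :
    ∃ xs : Fin n → ℝ, (0 ≤ xs ∧ tapp p n A xs ≤ b) ∧
      (∀ y : Fin n → ℝ, 0 ≤ y → tapp p n A y ≤ b → y ≤ xs) ∧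
      tapp p n A xs = b ∧
      (∀ y : Fin n → ℝ, 0 ≤ y → tapp p n A y = b → y ≤ xs) := by
  classical
  obtain ⟨x0, hx0nn, hx0le⟩ := hne
  have hrho0 : 0 ≤ tensorSpecRad p n B := by
    apply Real.sSup_nonneg
    rintro r ⟨lam, x, -, -, rfl⟩
    exact abs_nonneg lam
  have hs : 0 < s := lt_of_le_of_lt hrho0 hrho
  rcases Nat.eq_zero_or_pos n with hn | hn
  · subst hn
    refine ⟨x0, ⟨hx0nn, hx0le⟩, ?_, ?_, ?_⟩
    · intro y _ _ i; exact i.elim0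
    · funext i; exact i.elim0
    · intro y _ _ i; exact i.elim0
  haveI : NeZero n := ⟨hn.ne'⟩
  have huniv : (univ : Finset (Fin n)).Nonempty := ⟨⟨0, hn⟩, mem_univ _⟩
  set S : Set (Fin n → ℝ) := {x | 0 ≤ x ∧ tapp p n A x ≤ b} with hS
  have hx0S : x0 ∈ S := ⟨hx0nn, hx0le⟩
  have hSineq : ∀ x ∈ S, ∀ i, s * x i ^ p ≤ b i + tapp p n B x i := by
    intro x hx i
    have h1 := hx.2 i
    rw [Stmt5Aux.tapp_sub s B A hAe] at h1
    linarith
  -- S is bounded above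
  have hbound : ∃ M : ℝ, ∀ x ∈ S, ∀ i, x i ≤ M := by
    by_contra hcon
    push_neg at hcon
    choose y hyS iy hiy using hcon
    set t : ℕ → ℝ := fun k => univ.sup' huniv (y (k:ℝ)) with htdef
    have htk : ∀ k : ℕ, (k:ℝ) < t k := fun k =>
      lt_of_lt_of_le (hiy (k:ℝ)) (Finset.le_sup' (y (k:ℝ)) (mem_univ _))
    have htpos : ∀ k, 0 < t k := fun k => (Nat.cast_nonneg k).trans_lt (htk k)
    set u : ℕ → (Fin n → ℝ) := fun k => fun i => (1 / t k) * y (k:ℝ) i with hudef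
    have humem : ∀ k, u k ∈ Set.Icc (0 : Fin n → ℝ) 1 := by
      intro k
      constructor
      · intro i
        exact mul_nonneg (one_div_nonneg.mpr (htpos k).le) ((hyS (k:ℝ)).1 i)
      · intro i
        show (1 / t k) * y (k:ℝ) i ≤ 1
        have h1 : y (k:ℝ) i ≤ t k := Finset.le_sup' (y (k:ℝ)) (mem_univ i)
        calc (1 / t k) * y (k:ℝ) i ≤ (1 / t k) * t k :=
              mul_le_mul_of_nonneg_left h1 (one_div_nonneg.mpr (htpos k).le)
          _ = 1 := by rw [one_div, inv_mul_cancel₀ (htpos k).ne']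
    have husum : ∀ k, 1 ≤ ∑ i, u k i := by
      intro k
      obtain ⟨k1, -, hk1⟩ := Finset.exists_mem_eq_sup' huniv (y (k:ℝ))
      have h1 : u k k1 = 1 := by
        show (1 / t k) * y (k:ℝ) k1 = 1
        have h0 : y (k:ℝ) k1 = t k := by rw [htdef]; exact hk1.symm
        rw [h0, one_div, inv_mul_cancel₀ (htpos k).ne']
      calc (1:ℝ) = u k k1 := h1.symm
        _ ≤ ∑ i, u k i := Finset.single_le_sum (fun i _ => (humem k).1 i) (mem_univ k1)
    have huineq : ∀ k, ∀ i, s * u k i ^ p ≤ b i * (1 / t k) ^ p + tapp p n B (u k) i := by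
      intro k i
      have h1 := hSineq _ (hyS (k:ℝ)) i
      have h2 : tapp p n B (u k) i = (1 / t k) ^ p * tapp p n B (y (k:ℝ)) i :=
        Stmt5Aux.tapp_smul B (1 / t k) (y (k:ℝ)) i
      have h3 : (0:ℝ) < (1 / t k) ^ p := pow_pos (one_div_pos.mpr (htpos k)) p
      have h4 : s * u k i ^ p = (1 / t k) ^ p * (s * y (k:ℝ) i ^ p) := by
        show s * ((1 / t k) * y (k:ℝ) i) ^ p = _
        rw [mul_pow]; ring
      rw [h4, h2]
      calc (1 / t k) ^ p * (s * y (k:ℝ) i ^ p)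
          ≤ (1 / t k) ^ p * (b i + tapp p n B (y (k:ℝ)) i) :=
            mul_le_mul_of_nonneg_left h1 h3.le
        _ = b i * (1 / t k) ^ p + (1 / t k) ^ p * tapp p n B (y (k:ℝ)) i := by ring
    obtain ⟨uu, huu, φ, hφ, hconv⟩ :=
      (isCompact_Icc (a := (0 : Fin n → ℝ)) (b := 1)).tendsto_subseq humem
    have hinv : Tendsto (fun k => (1 / t (φ k)) ^ p) atTop (nhds 0) := by
      have h1 : Tendsto (fun k : ℕ => t (φ k)) atTop atTop := by
        apply tendsto_atTop_mono (fun k => (htk (φ k)).le)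
        apply tendsto_atTop_mono (fun k => ?_) (tendsto_natCast_atTop_atTop (R := ℝ))
        exact_mod_cast Nat.cast_le.mpr hφ.le_apply
      have h2 : Tendsto (fun k : ℕ => 1 / t (φ k)) atTop (nhds 0) := by
        simpa [Pi.inv_def] using h1.inv_tendsto_atTop
      have h3 := h2.pow p
      simpa [zero_pow hp] using h3
    have hulim : ∀ i, s * uu i ^ p ≤ tapp p n B uu i := by
      intro i
      have hL : Tendsto (fun k => s * u (φ k) i ^ p) atTop (nhds (s * uu i ^ p)) := by
        have : Continuous fun x : Fin n → ℝ => s * x i ^ p :=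
          continuous_const.mul ((continuous_apply i).pow p)
        exact (this.tendsto _).comp hconv
      have hR : Tendsto (fun k => b i * (1 / t (φ k)) ^ p + tapp p n B (u (φ k)) i)
          atTop (nhds (tapp p n B uu i)) := by
        have t1 : Tendsto (fun k => b i * (1 / t (φ k)) ^ p) atTop (nhds 0) := by
          have := hinv.const_mul (b i)
          simpa using this
        have t2 : Tendsto (fun k => tapp p n B (u (φ k)) i) atTop (nhds (tapp p n B uu i)) :=
          ((Stmt5Aux.tapp_cont B i).tendsto _).comp hconv
        simpa using t1.add t2
      exact le_of_tendsto_of_tendsto' hL hR (fun k => huineq (φ k) i)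
    have husumlim : 1 ≤ ∑ i, uu i := by
      have t5 : Tendsto (fun k => ∑ i, u (φ k) i) atTop (nhds (∑ i, uu i)) :=
        ((continuous_finset_sum _ fun i _ => continuous_apply i).tendsto _).comp hconv
      exact ge_of_tendsto t5 (Eventually.of_forall fun k => husum (φ k))
    have huune : uu ≠ 0 := by
      intro h
      rw [h] at husumlim
      simp at husumlim
      linarith
    obtain ⟨lam, x, hxne, heig, hslam⟩ :=
      Stmt5Aux.pf hp hn B hB s hs uu huu.1 huune hulim
    have hmem : |lam| ∈ {r : ℝ | ∃ lam : ℝ, ∃ x : Fin n → ℝ, x ≠ 0 ∧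
        (∀ i, tapp p n B x i = lam * x i ^ p) ∧ r = |lam|} := ⟨lam, x, hxne, heig, rfl⟩
    have := le_csSup (Stmt5Aux.spec_bddAbove B hB) hmem
    have h6 : tensorSpecRad p n B < s := hrho
    unfold tensorSpecRad at h6
    linarith
  obtain ⟨M, hM⟩ := hbound
  -- the supremum
  set xs : Fin n → ℝ := fun i => sSup ((fun x => x i) '' S) with hxs
  have hnei : ∀ i : Fin n, ((fun x : Fin n → ℝ => x i) '' S).Nonempty :=
    fun i => ⟨x0 i, x0, hx0S, rfl⟩
  have hbddi : ∀ i : Fin n, BddAbove ((fun x : Fin n → ℝ => x i) '' S) := by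
    intro i
    refine ⟨M, fun r hr => ?_⟩
    obtain ⟨x, hxS, rfl⟩ := hr
    exact hM x hxS i
  have hub : ∀ y ∈ S, y ≤ xs := by
    intro y hy i
    exact le_csSup (hbddi i) ⟨y, hy, rfl⟩
  have hxs0 : 0 ≤ xs := fun i => (hx0nn i).trans (hub x0 hx0S i)
  -- xs satisfies the inequality
  have hxsineq : ∀ i, s * xs i ^ p ≤ b i + tapp p n B xs i := by
    intro i
    set c : ℝ := b i + tapp p n B xs i with hc
    have hc0 : 0 ≤ c := by
      have h1 := hSineq x0 hx0S i
      have h2 : tapp p n B x0 i ≤ tapp p n B xs i :=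
        Stmt5Aux.tapp_mono hB hx0nn (hub x0 hx0S) i
      nlinarith [mul_nonneg hs.le (pow_nonneg (hx0nn i) p)]
    set tt : ℝ := (c / s) ^ ((p:ℝ)⁻¹) with httdef
    have hcs0 : 0 ≤ c / s := div_nonneg hc0 hs.le
    have htt0 : 0 ≤ tt := Real.rpow_nonneg hcs0 _
    have http : tt ^ p = c / s := Real.rpow_inv_natCast_pow hcs0 hp
    have hyt : ∀ r ∈ (fun x : Fin n → ℝ => x i) '' S, r ≤ tt := by
      rintro r ⟨y, hyS, rfl⟩
      have h1 := hSineq y hyS i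
      have h2 : tapp p n B y i ≤ tapp p n B xs i :=
        Stmt5Aux.tapp_mono hB hyS.1 (hub y hyS) i
      have h3 : y i ^ p ≤ tt ^ p := by
        rw [http, le_div_iff₀ hs]
        nlinarith
      exact le_of_pow_le_pow_left₀ hp htt0 h3
    have h4 : xs i ≤ tt := csSup_le (hnei i) hyt
    have h5 : xs i ^ p ≤ c / s := by
      rw [← http]
      exact pow_le_pow_left₀ (hxs0 i) h4 p
    calc s * xs i ^ p ≤ s * (c / s) := mul_le_mul_of_nonneg_left h5 hs.le
      _ = c := by field_simp
  have hxsle : tapp p n A xs ≤ b := by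
    intro i
    rw [Stmt5Aux.tapp_sub s B A hAe]
    linarith [hxsineq i]
  have hxsS : xs ∈ S := ⟨hxs0, hxsle⟩
  -- equality holds
  have hxseq : tapp p n A xs = b := by
    funext i
    by_contra hne'
    have hlt : s * xs i ^ p - tapp p n B xs i < b i := by
      have := hxsle i
      rw [Stmt5Aux.tapp_sub s B A hAe] at this
      exact lt_of_le_of_ne this (by rw [Stmt5Aux.tapp_sub s B A hAe] at hne'; exact hne')
    obtain ⟨ε, hε0, hε3⟩ : ∃ ε : ℝ, 0 < ε ∧
        s * (xs i + ε) ^ p - tapp p n B xs i < b i := by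
      have hopen : IsOpen {t : ℝ | s * (xs i + t) ^ p - tapp p n B xs i < b i} :=
        isOpen_lt ((continuous_const.mul ((continuous_const.add continuous_id).pow p)).sub
          continuous_const) continuous_const
      have h0mem : (0:ℝ) ∈ {t : ℝ | s * (xs i + t) ^ p - tapp p n B xs i < b i} := by
        simpa using hlt
      obtain ⟨r, hr0, hball⟩ := Metric.isOpen_iff.1 hopen 0 h0mem
      refine ⟨r/2, by linarith, ?_⟩
      have : (r/2 : ℝ) ∈ {t : ℝ | s * (xs i + t) ^ p - tapp p n B xs i < b i} := by
        apply hball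
        rw [Metric.mem_ball, Real.dist_eq, sub_zero, abs_of_pos (by linarith)]
        linarith
      exact this
    set x' : Fin n → ℝ := Function.update xs i (xs i + ε) with hx'
    have hx'ge : ∀ k, xs k ≤ x' k := by
      intro k
      rcases eq_or_ne k i with rfl | hk
      · rw [hx', Function.update_self]; linarith
      · rw [hx', Function.update_of_ne hk]
    have hx'0 : 0 ≤ x' := fun k => (hxs0 k).trans (hx'ge k)
    have hx'S : x' ∈ S := by
      refine ⟨hx'0, fun k => ?_⟩
      rw [Stmt5Aux.tapp_sub s B A hAe]
      have hBm : tapp p n B xs k ≤ tapp p n B x' k :=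
        Stmt5Aux.tapp_mono hB hxs0 hx'ge k
      rcases eq_or_ne k i with rfl | hk
      · have : x' k = xs k + ε := by rw [hx', Function.update_self]
        rw [this]
        linarith
      · have : x' k = xs k := by rw [hx', Function.update_of_ne hk]
        rw [this]
        have := hxsineq k
        linarith
    have h7 : x' i ≤ xs i := hub x' hx'S i
    rw [hx', Function.update_self] at h7
    linarith
  refine ⟨xs, ⟨hxs0, hxsle⟩, fun y hy1 hy2 => hub y ⟨hy1, hy2⟩, hxseq, ?_⟩
  intro y hy1 hy2
  exact hub y ⟨hy1, le_of_eq hy2⟩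


end Stmt5Aux

/-- for a nonsingular M-tensor, if `S_l = {x ≥ 0 : A x^{m-1} ≤ b}` is
nonempty then it has a maximal element, which is the maximal nonnegative solution. -/
theorem stmt5 (m n : ℕ) (hm : 2 ≤ m) (A : Fin n → (Fin (m-1) → Fin n) → ℝ)
    (hA : IsMTensor (m-1) n A) (b : Fin n → ℝ)
    (hne : ∃ x : Fin n → ℝ, 0 ≤ x ∧ tapp (m-1) n A x ≤ b) :
    ∃ xs : Fin n → ℝ, (0 ≤ xs ∧ tapp (m-1) n A xs ≤ b) ∧
      (∀ y : Fin n → ℝ, 0 ≤ y → tapp (m-1) n A y ≤ b → y ≤ xs) ∧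
      tapp (m-1) n A xs = b ∧
      (∀ y : Fin n → ℝ, 0 ≤ y → tapp (m-1) n A y = b → y ≤ xs) := by
  obtain ⟨s, B, hB, hrho, hAe⟩ := hA
  exact Stmt5Aux.main (m-1) n (by omega) A s B hB hrho hAe b hne

end
end

section
/- Define A ∈ R^{[4,3]} by a_{1111} = 0, a_{2222} = a_{3333} = 1, a_{1112} = a_{3111} = −1, and all other entries zero, and let b = (0,0,1)^T. Then A is a Z-tensor, the nonnegative solutions of A x^3 = b are exactly the vectors (c, 0, (1+c^3)^{1/3}) for c ≥ 0, the minimal nonnegative solution is (0,0,1), and there is no maximal nonnegative solution. -/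
open Finset Filter

noncomputable section

/-- The tensor of the remark: `a_{1111}=0`, `a_{2222}=a_{3333}=1`,
`a_{1112}=a_{3111}=-1`, zero elsewhere (0-indexed). -/
def A7 : Fin 3 → (Fin 3 → Fin 3) → ℝ := fun i js =>
  if i = 1 ∧ ∀ j, js j = 1 then 1
  else if i = 2 ∧ ∀ j, js j = 2 then 1
  else if i = 0 ∧ js 0 = 0 ∧ js 1 = 0 ∧ js 2 = 1 then -1
  else if i = 2 ∧ ∀ j, js j = 0 then -1
  else 0

lemma sum_pi_succ {n m : ℕ} {M : Type*} [AddCommMonoid M] (f : (Fin (n+1) → Fin m) → M) :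
    ∑ js, f js = ∑ a : Fin m, ∑ js : Fin n → Fin m, f (Fin.cons a js) := by
  rw [← (Fin.consEquiv (fun _ => Fin m)).sum_comp, Fintype.sum_prod_type]
  rfl

lemma cons3 (a b c : Fin 3) :
    (Fin.cons a (Fin.cons b (Fin.cons c default)) : Fin 3 → Fin 3) 2 = c := rfl

set_option maxHeartbeats 1000000 in
lemma tapp_A7 (x : Fin 3 → ℝ) :
    tapp 3 3 A7 x = ![-(x 0 ^ 2 * x 1), x 1 ^ 3, x 2 ^ 3 - x 0 ^ 3] := by
  funext i
  simp only [tapp, sum_pi_succ, Finset.univ_unique, Finset.sum_singleton]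
  fin_cases i <;>
    · simp only [A7, Fin.forall_fin_succ, Fin.sum_univ_succ, Fin.prod_univ_succ,
        Fin.cons_zero, Fin.cons_succ, Fin.sum_univ_zero, Fin.prod_univ_zero, cons3]
      simp (config := { decide := true }) only []
      norm_num [Matrix.cons_val_zero, Matrix.cons_val_one]
      ring

lemma cube_rpow {y : ℝ} (hy : 0 ≤ y) : (y ^ ((1:ℝ)/3)) ^ (3:ℕ) = y := by
  rw [← Real.rpow_natCast (y ^ ((1:ℝ)/3)) 3, ← Real.rpow_mul hy]
  norm_num

lemma cube_rpow' {y : ℝ} (hy : 0 ≤ y) : (y ^ (((3:ℝ))⁻¹)) ^ (3:ℕ) = y := by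
  rw [← Real.rpow_natCast (y ^ (((3:ℝ))⁻¹)) 3, ← Real.rpow_mul hy]
  norm_num

lemma sols (x : Fin 3 → ℝ) (hx : 0 ≤ x) :
    tapp 3 3 A7 x = ![0, 0, 1] ↔
      ∃ c : ℝ, 0 ≤ c ∧ x = ![c, 0, (1 + c ^ 3) ^ ((1 : ℝ)/3)] := by
  rw [tapp_A7]
  constructor
  · intro h
    have h0 := congrFun h 0
    have h1 := congrFun h 1
    have h2 := congrFun h 2
    simp only [Matrix.cons_val_zero, Matrix.cons_val_one, Matrix.head_cons,
      Matrix.cons_val_two, Matrix.tail_cons] at h0 h1 h2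
    have hx1 : x 1 = 0 := by
      have := pow_eq_zero_iff (n := 3) (by norm_num) |>.mp h1
      exact this
    have hc : 0 ≤ x 0 := hx 0
    have h2' : x 2 ^ 3 = 1 + x 0 ^ 3 := by linarith
    have hpos : (0:ℝ) ≤ 1 + x 0 ^ 3 := by positivity
    refine ⟨x 0, hc, ?_⟩
    funext i
    fin_cases i
    · simp
    · simpa using hx1
    · show x 2 = (1 + x 0 ^ 3) ^ ((1:ℝ)/3)
      have hx2 : 0 ≤ x 2 := hx 2
      have : x 2 ^ 3 = ((1 + x 0 ^ 3) ^ ((1:ℝ)/3)) ^ 3 := by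
        rw [cube_rpow hpos, h2']
      have hnn : 0 ≤ (1 + x 0 ^ 3) ^ ((1:ℝ)/3) := Real.rpow_nonneg hpos _
      rcases lt_trichotomy (x 2) ((1 + x 0 ^ 3) ^ ((1:ℝ)/3)) with hlt | heq | hgt
      · have := pow_lt_pow_left₀ hlt hx2 (n := 3) (by norm_num)
        linarith
      · exact heq
      · have := pow_lt_pow_left₀ hgt hnn (n := 3) (by norm_num)
        linarith
  · rintro ⟨c, hc, rfl⟩
    have hpos : (0:ℝ) ≤ 1 + c ^ 3 := by positivity
    funext i
    fin_cases i <;> norm_num [cube_rpow hpos, cube_rpow' hpos, Matrix.cons_val_two, Matrix.tail_cons, Matrix.head_cons]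

lemma zt : IsZTensor 3 3 A7 := by
  rintro i js ⟨j, hj⟩
  unfold A7
  split_ifs with h1 h2 h3 h4 <;> try norm_num
  · exact absurd (h1.2 j) (h1.1 ▸ hj)
  · exact absurd (h2.2 j) (h2.1 ▸ hj)

lemma minsol : (0 ≤ (![0, 0, 1] : Fin 3 → ℝ) ∧ tapp 3 3 A7 ![0, 0, 1] = ![0, 0, 1] ∧
      ∀ y : Fin 3 → ℝ, 0 ≤ y → tapp 3 3 A7 y = ![0, 0, 1] →
        (![0, 0, 1] : Fin 3 → ℝ) ≤ y) := by
  refine ⟨?_, ?_, ?_⟩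
  · intro i; fin_cases i <;> norm_num
  · rw [tapp_A7]; funext i; fin_cases i <;> norm_num [Matrix.cons_val_two, Matrix.tail_cons, Matrix.head_cons]
  · intro y hy hsol
    obtain ⟨c, hc, rfl⟩ := (sols y hy).mp hsol
    intro i
    fin_cases i
    · simpa using hc
    · simp
    · show (1:ℝ) ≤ (1 + c ^ 3) ^ ((1:ℝ)/3)
      calc (1:ℝ) = 1 ^ ((1:ℝ)/3) := (Real.one_rpow _).symm
        _ ≤ (1 + c ^ 3) ^ ((1:ℝ)/3) :=
          Real.rpow_le_rpow (by norm_num) (by nlinarith [pow_nonneg hc 3]) (by norm_num)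


/-- `A7` is a Z-tensor; with `b = (0,0,1)` the nonnegative solutions of
`A x³ = b` are exactly `(c, 0, (1+c³)^{1/3})` for `c ≥ 0`; `(0,0,1)` is the minimal
nonnegative solution, and there is no maximal nonnegative solution. -/
theorem stmt7 :
    IsZTensor 3 3 A7 ∧
    (∀ x : Fin 3 → ℝ, 0 ≤ x →
      (tapp 3 3 A7 x = ![0, 0, 1] ↔
        ∃ c : ℝ, 0 ≤ c ∧ x = ![c, 0, (1 + c ^ 3) ^ ((1 : ℝ)/3)])) ∧
    (0 ≤ (![0, 0, 1] : Fin 3 → ℝ) ∧ tapp 3 3 A7 ![0, 0, 1] = ![0, 0, 1] ∧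
      ∀ y : Fin 3 → ℝ, 0 ≤ y → tapp 3 3 A7 y = ![0, 0, 1] →
        (![0, 0, 1] : Fin 3 → ℝ) ≤ y) ∧
    ¬ ∃ xM : Fin 3 → ℝ, 0 ≤ xM ∧ tapp 3 3 A7 xM = ![0, 0, 1] ∧
      ∀ y : Fin 3 → ℝ, 0 ≤ y → tapp 3 3 A7 y = ![0, 0, 1] → y ≤ xM := by
  refine ⟨zt, sols, minsol, ?_⟩
  rintro ⟨xM, hM0, hMsol, hMmax⟩
  obtain ⟨c, hc, rfl⟩ := (sols xM hM0).mp hMsol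
  set y : Fin 3 → ℝ := ![c + 1, 0, (1 + (c+1) ^ 3) ^ ((1:ℝ)/3)] with hy
  have hy0 : 0 ≤ y := by
    intro i; fin_cases i
    · show (0:ℝ) ≤ c + 1; linarith
    · norm_num [hy]
    · show (0:ℝ) ≤ (1 + (c+1) ^ 3) ^ ((1:ℝ)/3)
      exact Real.rpow_nonneg (by positivity) _
  have hysol : tapp 3 3 A7 y = ![0, 0, 1] :=
    (sols y hy0).mpr ⟨c + 1, by linarith, rfl⟩
  have := hMmax y hy0 hysol 0
  simp only [hy] at this
  norm_num at this


end
end
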